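/- arXiv:2508.08436 — 2 statements merged into one kernel-verified Lean document; each statement's English description precedes it below -/
import Mathlib

section
/- Let P*_T = Q_T and, for t = T−1 down to 0, P*_t = Q_t + Aᵀ P*_{t+1} A − Aᵀ P*_{t+1} B (Bᵀ P*_{t+1} B + R_t)^{-1} Bᵀ P*_{t+1} A. If every Q_t and every R_t is symmetric positive definite, then the inverse (Bᵀ P*_{t+1} B + R_t)^{-1} exists at every step and every matrix P*_t (t = 0,…,T) is symmetric positive definite. -/
open MeasureTheory ProbabilityTheory Matrix Filter Finset
open scoped Kronecker ENNReal NNReal Topology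

noncomputable section

/-- Matrices carry the product measurable structure. -/
instance matrixMeasurableSpace {m n α : Type*} [MeasurableSpace α] :
    MeasurableSpace (Matrix m n α) :=
  MeasurableSpace.pi

attribute [local instance] Matrix.normedAddCommGroup Matrix.normedSpace

/-- Column-stacking vectorization of a `p × d` matrix, indexed by `Fin d × Fin p`. -/
def vecM {p d : ℕ} (M : Matrix (Fin p) (Fin d) ℝ) : Fin d × Fin p → ℝ :=
  fun k => M k.2 k.1

/-- Closed-loop state trajectory under the linear feedback policy `u_t = -K_t x_t`:
`x_0 = x0`, `x_{t+1} = A x_t + B u_t + ω_t = (A - B K_t) x_t + ω_t`. -/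
def traj {d p : ℕ} (A : Matrix (Fin d) (Fin d) ℝ) (B : Matrix (Fin d) (Fin p) ℝ)
    (K : ℕ → Matrix (Fin p) (Fin d) ℝ) (x0 : Fin d → ℝ) (ω : ℕ → Fin d → ℝ) :
    ℕ → Fin d → ℝ
  | 0 => x0
  | t + 1 => (A - B * K t).mulVec (traj A B K x0 ω t) + ω t

/-- Single-trajectory cost `Σ_{t<T} (x_tᵀ Q_t x_t + u_tᵀ R_t u_t) + x_Tᵀ Q_T x_T`
under `u_t = -K_t x_t`. -/
def trajCost {d p : ℕ} (T : ℕ) (A : Matrix (Fin d) (Fin d) ℝ) (B : Matrix (Fin d) (Fin p) ℝ)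
    (Q : ℕ → Matrix (Fin d) (Fin d) ℝ) (R : ℕ → Matrix (Fin p) (Fin p) ℝ)
    (K : ℕ → Matrix (Fin p) (Fin d) ℝ) (x0 : Fin d → ℝ) (ω : ℕ → Fin d → ℝ) : ℝ :=
  (∑ t ∈ Finset.range T,
      (traj A B K x0 ω t ⬝ᵥ (Q t).mulVec (traj A B K x0 ω t)
        + (K t).mulVec (traj A B K x0 ω t) ⬝ᵥ (R t).mulVec ((K t).mulVec (traj A B K x0 ω t))))
    + traj A B K x0 ω T ⬝ᵥ (Q T).mulVec (traj A B K x0 ω T)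

/-- Expected cost `C(K)` of the linear policy `K`. -/
def expCost {Ω : Type*} [MeasurableSpace Ω] (μ : Measure Ω) {d p : ℕ} (T : ℕ)
    (A : Matrix (Fin d) (Fin d) ℝ) (B : Matrix (Fin d) (Fin p) ℝ)
    (Q : ℕ → Matrix (Fin d) (Fin d) ℝ) (R : ℕ → Matrix (Fin p) (Fin p) ℝ)
    (x0 : Ω → Fin d → ℝ) (ω : ℕ → Ω → Fin d → ℝ)
    (K : ℕ → Matrix (Fin p) (Fin d) ℝ) : ℝ :=
  ∫ a, trajCost T A B Q R K (x0 a) (fun t => ω t a) ∂μ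

/-- Auxiliary backward Riccati recursion, `riccatiAux k = P*_{T-k}`. -/
def riccatiAux {d p : ℕ} (A : Matrix (Fin d) (Fin d) ℝ) (B : Matrix (Fin d) (Fin p) ℝ)
    (Q : ℕ → Matrix (Fin d) (Fin d) ℝ) (R : ℕ → Matrix (Fin p) (Fin p) ℝ) (T : ℕ) :
    ℕ → Matrix (Fin d) (Fin d) ℝ
  | 0 => Q T
  | k + 1 =>
      Q (T - (k + 1)) + Aᵀ * riccatiAux A B Q R T k * A -
        Aᵀ * riccatiAux A B Q R T k * B *
          (Bᵀ * riccatiAux A B Q R T k * B + R (T - (k + 1)))⁻¹ *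
            Bᵀ * riccatiAux A B Q R T k * A

/-- The optimal (backward) Riccati solution `P*_t` on horizon `T`. -/
def riccatiP {d p : ℕ} (A : Matrix (Fin d) (Fin d) ℝ) (B : Matrix (Fin d) (Fin p) ℝ)
    (Q : ℕ → Matrix (Fin d) (Fin d) ℝ) (R : ℕ → Matrix (Fin p) (Fin p) ℝ) (T t : ℕ) :
    Matrix (Fin d) (Fin d) ℝ :=
  riccatiAux A B Q R T (T - t)

/-- The optimal feedback gains `K*_t = (Bᵀ P*_{t+1} B + R_t)⁻¹ Bᵀ P*_{t+1} A`. -/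
def Kopt {d p : ℕ} (A : Matrix (Fin d) (Fin d) ℝ) (B : Matrix (Fin d) (Fin p) ℝ)
    (Q : ℕ → Matrix (Fin d) (Fin d) ℝ) (R : ℕ → Matrix (Fin p) (Fin p) ℝ) (T t : ℕ) :
    Matrix (Fin p) (Fin d) ℝ :=
  (Bᵀ * riccatiP A B Q R T (t + 1) * B + R t)⁻¹ * Bᵀ * riccatiP A B Q R T (t + 1) * A

/-- Auxiliary backward policy-Riccati recursion, `policyPAux k = P^K_{T-k}`. -/
def policyPAux {d p : ℕ} (A : Matrix (Fin d) (Fin d) ℝ) (B : Matrix (Fin d) (Fin p) ℝ)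
    (Q : ℕ → Matrix (Fin d) (Fin d) ℝ) (R : ℕ → Matrix (Fin p) (Fin p) ℝ)
    (K : ℕ → Matrix (Fin p) (Fin d) ℝ) (T : ℕ) : ℕ → Matrix (Fin d) (Fin d) ℝ
  | 0 => Q T
  | k + 1 =>
      Q (T - (k + 1)) + (K (T - (k + 1)))ᵀ * R (T - (k + 1)) * K (T - (k + 1)) +
        (A - B * K (T - (k + 1)))ᵀ * policyPAux A B Q R K T k * (A - B * K (T - (k + 1)))

/-- The policy Riccati solution `P^K_t` on horizon `T`. -/
def policyP {d p : ℕ} (A : Matrix (Fin d) (Fin d) ℝ) (B : Matrix (Fin d) (Fin p) ℝ)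
    (Q : ℕ → Matrix (Fin d) (Fin d) ℝ) (R : ℕ → Matrix (Fin p) (Fin p) ℝ)
    (K : ℕ → Matrix (Fin p) (Fin d) ℝ) (T t : ℕ) : Matrix (Fin d) (Fin d) ℝ :=
  policyPAux A B Q R K T (T - t)

/-- The second-moment matrix `E[x xᵀ]` of a random vector `x`. -/
def secondMoment {Ω : Type*} [MeasurableSpace Ω] (μ : Measure Ω) {ι : Type*}
    (x : Ω → ι → ℝ) : Matrix ι ι ℝ :=
  Matrix.of fun i j => ∫ a, x a i * x a j ∂μ

/-- `ν` is the centered (multivariate) Gaussian law on `ι → ℝ` with covariance matrix `C`: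
every linear functional pushes `ν` forward to the corresponding real Gaussian. -/
def IsCenteredGaussian {ι : Type*} [Fintype ι] (ν : Measure (ι → ℝ)) (C : Matrix ι ι ℝ) :
    Prop :=
  IsProbabilityMeasure ν ∧
    ∀ l : ι → ℝ, ν.map (fun x => ∑ i, l i * x i)
      = gaussianReal 0 (Real.toNNReal (l ⬝ᵥ C.mulVec l))

/-- Convergence in distribution (weak convergence of the pushforward laws). -/
def TendstoInDistribution {Ω E : Type*} [MeasurableSpace Ω] [MeasurableSpace E]
    [TopologicalSpace E] (μ : Measure Ω) (Z : ℕ → Ω → E) (ν : Measure E) : Prop :=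
  ∀ f : BoundedContinuousFunction E ℝ,
    Tendsto (fun n => ∫ a, f (Z n a) ∂μ) atTop (𝓝 (∫ x, f x ∂ν))

/-- The noise sequence `ω` is i.i.d., mean zero, square integrable, and the family
`(x0, ω_0, ω_1, …)` is jointly independent; `x0` has finite second moment. -/
def IIDZeroMeanNoise {Ω : Type*} [MeasurableSpace Ω] (μ : Measure Ω) {d : ℕ}
    (x0 : Ω → Fin d → ℝ) (ω : ℕ → Ω → Fin d → ℝ) : Prop :=
  Measurable x0 ∧ (∀ t, Measurable (ω t)) ∧
    iIndepFun (fun i : Option ℕ => i.elim x0 ω) μ ∧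
    (∀ s t, IdentDistrib (ω s) (ω t) μ μ) ∧
    (∀ t, MemLp (ω t) 2 μ) ∧ (∀ t, ∫ a, ω t a ∂μ = 0) ∧ MemLp x0 2 μ

/-- Stabilizability: some gain `K` makes the spectral radius of `A + BK` (over `ℂ`)
strictly smaller than one. -/
def Stabilizable {d p : ℕ} (A : Matrix (Fin d) (Fin d) ℝ) (B : Matrix (Fin d) (Fin p) ℝ) :
    Prop :=
  ∃ K : Matrix (Fin p) (Fin d) ℝ,
    ∀ z ∈ spectrum ℂ ((A + B * K).map (Complex.ofReal)), ‖z‖ < 1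

/-- i.i.d. positive bootstrap weights with mean one and variance one. -/
def IIDBootstrapWeights {Ω : Type*} [MeasurableSpace Ω] (μ : Measure Ω) (W : ℕ → Ω → ℝ) :
    Prop :=
  (∀ ℓ, Measurable (W ℓ)) ∧ iIndepFun W μ ∧
    (∀ ℓ k, IdentDistrib (W ℓ) (W k) μ μ) ∧ (∀ ℓ, ∀ᵐ a ∂μ, 0 < W ℓ a) ∧
    (∀ ℓ, MemLp (W ℓ) 2 μ) ∧ (∀ ℓ, ∫ a, W ℓ a ∂μ = 1) ∧
    (∀ ℓ, ∫ a, (W ℓ a - 1) ^ 2 ∂μ = 1)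

/-- The uniform probability measure on `[-r, r] ⊆ ℝ`. -/
def unifIcc (r : ℝ) : Measure ℝ :=
  (volume (Set.Icc (-r) r))⁻¹ • volume.restrict (Set.Icc (-r) r)

/-- The entries of the random `p × d` matrix `U` are i.i.d. uniform on `[-r, r]`. -/
def IIDUniformEntries {Ω : Type*} [MeasurableSpace Ω] (μ : Measure Ω) {p d : ℕ} (r : ℝ)
    (U : Ω → Matrix (Fin p) (Fin d) ℝ) : Prop :=
  Measurable U ∧
    iIndepFun (fun e : Fin p × Fin d => fun a => U a e.1 e.2) μ ∧
    ∀ e : Fin p × Fin d, μ.map (fun a => U a e.1 e.2) = unifIcc r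


lemma riccati_step {d p : ℕ} (A : Matrix (Fin d) (Fin d) ℝ) (B : Matrix (Fin d) (Fin p) ℝ)
    {Q P : Matrix (Fin d) (Fin d) ℝ} {R : Matrix (Fin p) (Fin p) ℝ}
    (hQ : Q.PosDef) (hR : R.PosDef) (hP : P.PosDef) :
    IsUnit (Bᵀ * P * B + R) ∧
      (Q + Aᵀ * P * A - Aᵀ * P * B * (Bᵀ * P * B + R)⁻¹ * Bᵀ * P * A).PosDef := by
  have hBPB : (Bᵀ * P * B).PosSemidef := by
    have := hP.posSemidef.conjTranspose_mul_mul_same B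
    rwa [conjTranspose_eq_transpose_of_trivial] at this
  set S := Bᵀ * P * B + R with hSdef
  clear_value S
  have hS : S.PosDef := hSdef ▸ Matrix.PosDef.posSemidef_add hBPB hR
  have hSdet : IsUnit S.det := hS.det_pos.ne'.isUnit
  have hSunit : IsUnit S := (isUnit_iff_isUnit_det S).mpr hSdet
  refine ⟨hSunit, ?_⟩
  set K : Matrix (Fin p) (Fin d) ℝ := S⁻¹ * Bᵀ * P * A with hKdef
  clear_value K
  have hPt : Pᵀ = P := by
    rw [← conjTranspose_eq_transpose_of_trivial]; exact hP.isHermitian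
  have hSt : Sᵀ = S := by
    rw [← conjTranspose_eq_transpose_of_trivial]; exact hS.isHermitian
  have hKt : Kᵀ = Aᵀ * P * B * S⁻¹ := by
    rw [hKdef, transpose_mul, transpose_mul, transpose_mul, transpose_nonsing_inv, hSt, hPt,
      transpose_transpose]
    simp only [Matrix.mul_assoc]
  have hSK : S * K = Bᵀ * P * A := by
    rw [hKdef, Matrix.mul_assoc, Matrix.mul_assoc, ← Matrix.mul_assoc S,
      Matrix.mul_nonsing_inv S hSdet, Matrix.one_mul, Matrix.mul_assoc]
  set X : Matrix (Fin d) (Fin d) ℝ := Aᵀ * P * B * S⁻¹ * Bᵀ * P * A with hXdef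
  clear_value X
  have hX1 : Aᵀ * P * (B * K) = X := by
    rw [hKdef, hXdef]; simp only [Matrix.mul_assoc]
  have hX2 : Kᵀ * (Bᵀ * P * A) = X := by
    rw [hKt, hXdef]; simp only [Matrix.mul_assoc]
  have hX3 : Kᵀ * R * K + Kᵀ * (Bᵀ * P * B) * K = X := by
    have h : Kᵀ * R * K + Kᵀ * (Bᵀ * P * B) * K = Kᵀ * (S * K) := by
      rw [hSdef, Matrix.add_mul, Matrix.mul_add]
      simp only [Matrix.mul_assoc]
      abel
    rw [h, hSK, hX2]
  have e1 : (A - B * K)ᵀ * P * (A - B * K)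
      = Aᵀ * P * A - Aᵀ * P * (B * K) - Kᵀ * (Bᵀ * P * A) + Kᵀ * (Bᵀ * P * B) * K := by
    simp only [transpose_sub, transpose_mul, Matrix.sub_mul, Matrix.mul_sub, Matrix.mul_assoc]
    abel
  have key : Q + Aᵀ * P * A - X
      = Q + (Kᵀ * R * K + (A - B * K)ᵀ * P * (A - B * K)) := by
    rw [e1, hX1, hX2, ← hX3]
    abel
  rw [key]
  have h1 : (Kᵀ * R * K).PosSemidef := by
    have := hR.posSemidef.conjTranspose_mul_mul_same K
    rwa [conjTranspose_eq_transpose_of_trivial] at this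
  have h2 : ((A - B * K)ᵀ * P * (A - B * K)).PosSemidef := by
    have := hP.posSemidef.conjTranspose_mul_mul_same (A - B * K)
    rwa [conjTranspose_eq_transpose_of_trivial] at this
  exact hQ.add_posSemidef (h1.add h2)


/-- The backward discrete algebraic Riccati recursion started from a
symmetric positive definite terminal condition, with symmetric positive definite cost
matrices, is well posed: at every step the matrix `Bᵀ P*_{t+1} B + R_t` is invertible,
and every `P*_t` (for `t = 0, …, T`) is symmetric positive definite. -/
theorem riccati_recursion_posDef
    {d p T : ℕ}
    (A : Matrix (Fin d) (Fin d) ℝ) (B : Matrix (Fin d) (Fin p) ℝ)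
    (Q : ℕ → Matrix (Fin d) (Fin d) ℝ) (R : ℕ → Matrix (Fin p) (Fin p) ℝ)
    (hQ : ∀ t ≤ T, (Q t).PosDef) (hR : ∀ t < T, (R t).PosDef)
    (P : ℕ → Matrix (Fin d) (Fin d) ℝ)
    (hPT : P T = Q T)
    (hPrec : ∀ t < T, P t =
      Q t + Aᵀ * P (t + 1) * A -
        Aᵀ * P (t + 1) * B * (Bᵀ * P (t + 1) * B + R t)⁻¹ * Bᵀ * P (t + 1) * A) :
    (∀ t < T, IsUnit (Bᵀ * P (t + 1) * B + R t)) ∧ (∀ t ≤ T, (P t).PosDef) := by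
  have hstep : ∀ t < T, (P (t+1)).PosDef → IsUnit (Bᵀ * P (t+1) * B + R t) ∧ (P t).PosDef := by
    intro t ht h1
    have h := riccati_step A B (hQ t ht.le) (hR t ht) h1
    exact ⟨h.1, (hPrec t ht) ▸ h.2⟩
  have hpos : ∀ k, k ≤ T → (P (T - k)).PosDef := by
    intro k
    induction k with
    | zero => intro _; simpa [hPT] using hQ T le_rfl
    | succ k ih =>
      intro hk
      have ht : T - (k+1) < T := by omega
      have ht1 : T - (k+1) + 1 = T - k := by omega
      have h1 : (P (T - (k+1) + 1)).PosDef := by rw [ht1]; exact ih (by omega)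
      exact (hstep _ ht h1).2
  have hposAll : ∀ t ≤ T, (P t).PosDef := by
    intro t htT
    have h : T - (T - t) = t := by omega
    simpa [h] using hpos (T - t) (by omega)
  exact ⟨fun t ht => (hstep t ht (hposAll (t+1) (by omega))).1, hposAll⟩


end
end

section
/- (Exact policy gradient.) For every t = 0,…,T−1, the gradient of the cost C(K) with respect to the block K_t (the other blocks held fixed) is ∇_{K_t} C(K) = 2 E_t(K_t) Σ_t, where E_t(K_t) = (R_t + Bᵀ P^K_{t+1} B) K_t − Bᵀ P^K_{t+1} A and Σ_t = E[x_t x_tᵀ] is the state second-moment matrix under policy K; equivalently, the Fréchet derivative of C in the direction H ∈ ℝ^{p×d} (applied to K_t) equals 2 trace(Hᵀ E_t(K_t) Σ_t). -/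
open MeasureTheory ProbabilityTheory Matrix Filter Finset
open scoped Kronecker ENNReal NNReal Topology

noncomputable section

attribute [local instance] Matrix.normedAddCommGroup Matrix.normedSpace

section PGHelpers

variable {d p : ℕ} (A : Matrix (Fin d) (Fin d) ℝ) (B : Matrix (Fin d) (Fin p) ℝ)
  (Q : ℕ → Matrix (Fin d) (Fin d) ℝ) (R : ℕ → Matrix (Fin p) (Fin p) ℝ)
  (T : ℕ)

lemma pgDot1 {n m : ℕ} (M : Matrix (Fin n) (Fin m) ℝ) (u : Fin n → ℝ) (v : Fin m → ℝ) :
    u ⬝ᵥ M.mulVec v = Mᵀ.mulVec u ⬝ᵥ v := by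
  rw [Matrix.dotProduct_mulVec, Matrix.mulVec_transpose]

lemma pgDot2 {n m : ℕ} (M : Matrix (Fin n) (Fin m) ℝ) (u : Fin m → ℝ) (v : Fin n → ℝ) :
    M.mulVec u ⬝ᵥ v = u ⬝ᵥ Mᵀ.mulVec v := by
  rw [pgDot1, Matrix.transpose_transpose]

def pgTcost (L : ℕ → Matrix (Fin p) (Fin d) ℝ) (ωf : ℕ → Fin d → ℝ) :
    ℕ → (Fin d → ℝ) → ℝ
  | 0, y => y ⬝ᵥ (Q T).mulVec y
  | k+1, y =>
      y ⬝ᵥ (Q (T - (k+1))).mulVec y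
        + (L (T - (k+1))).mulVec y ⬝ᵥ (R (T - (k+1))).mulVec ((L (T - (k+1))).mulVec y)
        + pgTcost L ωf k ((A - B * L (T - (k+1))).mulVec y + ωf (T - (k+1)))

lemma pgTcost_spec (L : ℕ → Matrix (Fin p) (Fin d) ℝ) (x0 : Fin d → ℝ)
    (ωf : ℕ → Fin d → ℝ) : ∀ k, k ≤ T →
    pgTcost A B Q R T L ωf k (traj A B L x0 ωf (T - k))
      = (∑ s ∈ Finset.Ico (T - k) T,
          (traj A B L x0 ωf s ⬝ᵥ (Q s).mulVec (traj A B L x0 ωf s)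
            + (L s).mulVec (traj A B L x0 ωf s) ⬝ᵥ
                (R s).mulVec ((L s).mulVec (traj A B L x0 ωf s))))
        + traj A B L x0 ωf T ⬝ᵥ (Q T).mulVec (traj A B L x0 ωf T) := by
  intro k
  induction k with
  | zero => intro _; simp [pgTcost]
  | succ k ih =>
    intro hk
    have hn : T - k = (T - (k+1)) + 1 := by omega
    have hlt : T - (k+1) < T := by omega
    have htr : traj A B L x0 ωf ((T - (k+1)) + 1)
        = (A - B * L (T - (k+1))).mulVec (traj A B L x0 ωf (T - (k+1))) + ωf (T - (k+1)) := by
      simp [traj]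
    rw [Finset.sum_eq_sum_Ico_succ_bot hlt]
    have ih' := ih (by omega)
    rw [hn] at ih'
    simp only [pgTcost]
    rw [← htr, ih']
    ring

lemma pgTrajCost_eq (L : ℕ → Matrix (Fin p) (Fin d) ℝ) (x0 : Fin d → ℝ)
    (ωf : ℕ → Fin d → ℝ) :
    trajCost T A B Q R L x0 ωf = pgTcost A B Q R T L ωf T x0 := by
  have h := pgTcost_spec A B Q R T L x0 ωf T le_rfl
  simp only [Nat.sub_self] at h
  rw [trajCost, Finset.range_eq_Ico, ← h]
  rfl

lemma pgTcost_congrL (L L' : ℕ → Matrix (Fin p) (Fin d) ℝ) (ωf : ℕ → Fin d → ℝ) :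
    ∀ k, (∀ j < k, L (T - (j+1)) = L' (T - (j+1))) → ∀ y,
      pgTcost A B Q R T L ωf k y = pgTcost A B Q R T L' ωf k y := by
  intro k
  induction k with
  | zero => intro _ y; rfl
  | succ k ih =>
    intro h y
    simp only [pgTcost]
    rw [h k (by omega), ih (fun j hj => h j (by omega))]

lemma traj_congrL (K K' : ℕ → Matrix (Fin p) (Fin d) ℝ) (x0 : Fin d → ℝ)
    (ωf : ℕ → Fin d → ℝ) : ∀ n, (∀ s < n, K s = K' s) →
      traj A B K x0 ωf n = traj A B K' x0 ωf n := by
  intro n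
  induction n with
  | zero => intro _; rfl
  | succ n ih =>
    intro h
    simp only [traj]
    rw [h n (by omega), ih (fun s hs => h s (by omega))]

lemma traj_congr_noise (K : ℕ → Matrix (Fin p) (Fin d) ℝ) (x0 x0' : Fin d → ℝ)
    (ωf ωf' : ℕ → Fin d → ℝ) (hx : x0 = x0') : ∀ n, (∀ s < n, ωf s = ωf' s) →
      traj A B K x0 ωf n = traj A B K x0' ωf' n := by
  intro n
  induction n with
  | zero => intro _; exact hx
  | succ n ih =>
    intro h
    simp only [traj]
    rw [h n (by omega), ih (fun s hs => h s (by omega))]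

def pgQvec (K : ℕ → Matrix (Fin p) (Fin d) ℝ) (ωf : ℕ → Fin d → ℝ) : ℕ → (Fin d → ℝ)
  | 0 => 0
  | k+1 => (A - B * K (T - (k+1)))ᵀ.mulVec
      ((policyPAux A B Q R K T k + (policyPAux A B Q R K T k)ᵀ).mulVec (ωf (T - (k+1)))
        + pgQvec K ωf k)

def pgRsc (K : ℕ → Matrix (Fin p) (Fin d) ℝ) (ωf : ℕ → Fin d → ℝ) : ℕ → ℝ
  | 0 => 0
  | k+1 => ωf (T - (k+1)) ⬝ᵥ (policyPAux A B Q R K T k).mulVec (ωf (T - (k+1)))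
      + pgQvec A B Q R T K ωf k ⬝ᵥ ωf (T - (k+1)) + pgRsc K ωf k

lemma pgTcost_structure (K : ℕ → Matrix (Fin p) (Fin d) ℝ) (ωf : ℕ → Fin d → ℝ) :
    ∀ k y, pgTcost A B Q R T K ωf k y
      = y ⬝ᵥ (policyPAux A B Q R K T k).mulVec y
        + pgQvec A B Q R T K ωf k ⬝ᵥ y + pgRsc A B Q R T K ωf k := by
  intro k
  induction k with
  | zero => intro y; simp [pgTcost, policyPAux, pgQvec, pgRsc]
  | succ k ih =>
    intro y
    simp only [pgTcost, pgQvec, pgRsc, policyPAux]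
    rw [ih]
    set n := T - (k+1)
    set P := policyPAux A B Q R K T k
    set F := A - B * K n
    set w := ωf n
    set q := pgQvec A B Q R T K ωf k
    simp only [Matrix.mulVec_add, Matrix.add_mulVec, dotProduct_add,
      add_dotProduct, pgDot2, Matrix.transpose_transpose, Matrix.mulVec_mulVec,
      Matrix.transpose_mul, Matrix.mul_assoc]
    rw [show y ⬝ᵥ (Fᵀ * P) *ᵥ w = w ⬝ᵥ (Pᵀ * F) *ᵥ y from by
      rw [pgDot1, Matrix.transpose_mul, Matrix.transpose_transpose, dotProduct_comm]]
    ring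

lemma pgPointwise (K : ℕ → Matrix (Fin p) (Fin d) ℝ) (M : Matrix (Fin p) (Fin d) ℝ)
    (t : ℕ) (ht : t < T) (x0 : Fin d → ℝ) (ωf : ℕ → Fin d → ℝ) :
    trajCost T A B Q R (Function.update K t M) x0 ωf
      = ((∑ s ∈ Finset.range t,
            (traj A B K x0 ωf s ⬝ᵥ (Q s).mulVec (traj A B K x0 ωf s)
              + (K s).mulVec (traj A B K x0 ωf s) ⬝ᵥ
                  (R s).mulVec ((K s).mulVec (traj A B K x0 ωf s))))
          + ωf t ⬝ᵥ (policyPAux A B Q R K T (T - (t+1))).mulVec (ωf t)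
          + pgQvec A B Q R T K ωf (T - (t+1)) ⬝ᵥ ωf t + pgRsc A B Q R T K ωf (T - (t+1)))
        + traj A B K x0 ωf t ⬝ᵥ
            (Q t + Mᵀ * R t * M
              + (A - B * M)ᵀ * policyPAux A B Q R K T (T - (t+1)) * (A - B * M)).mulVec
            (traj A B K x0 ωf t)
        + ((policyPAux A B Q R K T (T - (t+1)) + (policyPAux A B Q R K T (T - (t+1)))ᵀ).mulVec
              (ωf t) + pgQvec A B Q R T K ωf (T - (t+1))) ⬝ᵥ
            ((A - B * M).mulVec (traj A B K x0 ωf t)) := by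
  set K' := Function.update K t M with hK'
  set k0 := T - (t+1) with hk0
  have hupd : ∀ s ≠ t, K' s = K s := fun s hs => Function.update_of_ne hs _ _
  have htraj : ∀ s ≤ t, traj A B K' x0 ωf s = traj A B K x0 ωf s := fun s hs =>
    traj_congrL A B K' K x0 ωf s (fun s' hs' => hupd s' (by omega))
  have h2 := pgTcost_spec A B Q R T K' x0 ωf k0 (by omega)
  have e : T - k0 = t + 1 := by omega
  rw [e] at h2
  have hsplit : trajCost T A B Q R K' x0 ωf
      = (∑ s ∈ Finset.range (t+1),
          (traj A B K' x0 ωf s ⬝ᵥ (Q s).mulVec (traj A B K' x0 ωf s)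
            + (K' s).mulVec (traj A B K' x0 ωf s) ⬝ᵥ
                (R s).mulVec ((K' s).mulVec (traj A B K' x0 ωf s))))
        + pgTcost A B Q R T K' ωf k0 (traj A B K' x0 ωf (t+1)) := by
    rw [trajCost, Finset.range_eq_Ico,
      ← Finset.sum_Ico_consecutive _ (Nat.zero_le (t+1)) (by omega : t + 1 ≤ T),
      h2, ← Finset.range_eq_Ico]
    ring
  rw [hsplit, Finset.sum_range_succ]
  have hsums : ∀ s ∈ Finset.range t,
      (traj A B K' x0 ωf s ⬝ᵥ (Q s).mulVec (traj A B K' x0 ωf s)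
        + (K' s).mulVec (traj A B K' x0 ωf s) ⬝ᵥ
            (R s).mulVec ((K' s).mulVec (traj A B K' x0 ωf s)))
      = (traj A B K x0 ωf s ⬝ᵥ (Q s).mulVec (traj A B K x0 ωf s)
        + (K s).mulVec (traj A B K x0 ωf s) ⬝ᵥ
            (R s).mulVec ((K s).mulVec (traj A B K x0 ωf s))) := by
    intro s hs
    rw [Finset.mem_range] at hs
    rw [htraj s (by omega), hupd s (by omega)]
  rw [Finset.sum_congr rfl hsums]
  have hKt : K' t = M := Function.update_self t M K
  have htcongr : ∀ y, pgTcost A B Q R T K' ωf k0 y = pgTcost A B Q R T K ωf k0 y :=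
    pgTcost_congrL A B Q R T K' K ωf k0 (fun j hj => hupd _ (by omega))
  have htr1 : traj A B K' x0 ωf (t+1)
      = (A - B * M).mulVec (traj A B K x0 ωf t) + ωf t := by
    simp only [traj, hKt, htraj t le_rfl]
  rw [htr1, htcongr, pgTcost_structure, hKt, htraj t le_rfl]
  set P := policyPAux A B Q R K T k0
  set X := traj A B K x0 ωf t
  set w := ωf t
  set q := pgQvec A B Q R T K ωf k0
  simp only [Matrix.mulVec_add, Matrix.add_mulVec, dotProduct_add,
    add_dotProduct, pgDot2, Matrix.transpose_transpose, Matrix.mulVec_mulVec,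
    Matrix.transpose_mul, Matrix.mul_assoc]
  rw [show X ⬝ᵥ ((A - B * M)ᵀ * P) *ᵥ w = w ⬝ᵥ (Pᵀ * (A - B * M)) *ᵥ X from by
    rw [pgDot1, Matrix.transpose_mul, Matrix.transpose_transpose, dotProduct_comm]]
  ring

lemma pgP_symm (K : ℕ → Matrix (Fin p) (Fin d) ℝ) (hT : 1 ≤ T)
    (hQ : ∀ s ≤ T, (Q s)ᵀ = Q s) (hR : ∀ s < T, (R s)ᵀ = R s) :
    ∀ k, (policyPAux A B Q R K T k)ᵀ = policyPAux A B Q R K T k := by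
  intro k
  induction k with
  | zero => exact hQ T le_rfl
  | succ k ih =>
    simp only [policyPAux, Matrix.transpose_add, Matrix.transpose_mul,
      Matrix.transpose_transpose, ih, hQ (T - (k+1)) (by omega), hR (T - (k+1)) (by omega),
      Matrix.mul_assoc]

end PGHelpers

section PGProb

open MeasureTheory

variable {Ω : Type*} [MeasurableSpace Ω] {μ : Measure Ω}

lemma pgMemLp_apply {n : ℕ} {f : Ω → Fin n → ℝ} (hf : MemLp f 2 μ) (i : Fin n) :
    MemLp (fun a => f a i) 2 μ :=
  (ContinuousLinearMap.proj (R := ℝ) (φ := fun _ : Fin n => ℝ) i).comp_memLp' hf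

lemma pgIntegrable_mul {f g : Ω → ℝ} (hf : MemLp f 2 μ) (hg : MemLp g 2 μ) :
    Integrable (fun a => f a * g a) μ := by
  have h : MemLp (f • g) 1 μ := MemLp.smul (r := 1) hg hf
  rw [memLp_one_iff_integrable] at h
  exact h

lemma pgMemLp_mulVec {n m : ℕ} (S : Matrix (Fin n) (Fin m) ℝ) {f : Ω → Fin m → ℝ}
    (hf : ∀ j, MemLp (fun a => f a j) 2 μ) (i : Fin n) :
    MemLp (fun a => S.mulVec (f a) i) 2 μ := by
  have h : (fun a => S.mulVec (f a) i) = fun a => ∑ j, S i j * f a j := by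
    funext a; simp [Matrix.mulVec, dotProduct]
  rw [h]
  exact memLp_finset_sum _ (fun j _ => (hf j).const_mul _)

lemma pgDot_expand {n m : ℕ} (S : Matrix (Fin n) (Fin m) ℝ) (u : Fin n → ℝ) (v : Fin m → ℝ) :
    u ⬝ᵥ S.mulVec v = ∑ i, ∑ j, S i j * (u i * v j) := by
  simp only [dotProduct, Matrix.mulVec, Finset.mul_sum]
  exact Finset.sum_congr rfl fun i _ => Finset.sum_congr rfl fun j _ => by ring

lemma pgIntegrable_dot {n m : ℕ} (S : Matrix (Fin n) (Fin m) ℝ) {f : Ω → Fin n → ℝ}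
    {g : Ω → Fin m → ℝ} (hf : ∀ i, MemLp (fun a => f a i) 2 μ)
    (hg : ∀ j, MemLp (fun a => g a j) 2 μ) :
    Integrable (fun a => f a ⬝ᵥ S.mulVec (g a)) μ := by
  simp only [pgDot_expand]
  exact integrable_finset_sum _ fun i _ => integrable_finset_sum _ fun j _ =>
    (pgIntegrable_mul (hf i) (hg j)).const_mul _

lemma pgIntegrable_dotPlain {n : ℕ} {f g : Ω → Fin n → ℝ}
    (hf : ∀ i, MemLp (fun a => f a i) 2 μ) (hg : ∀ j, MemLp (fun a => g a j) 2 μ) :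
    Integrable (fun a => f a ⬝ᵥ g a) μ := by
  simp only [dotProduct]
  exact integrable_finset_sum _ fun i _ => pgIntegrable_mul (hf i) (hg i)

lemma pgCrossZero {n m : ℕ} (S : Matrix (Fin n) (Fin m) ℝ) {u : Ω → Fin n → ℝ}
    {v : Ω → Fin m → ℝ} (hu : ∀ i, MemLp (fun a => u a i) 2 μ)
    (hv : ∀ j, MemLp (fun a => v a j) 2 μ)
    (hz : ∀ i j, ∫ a, u a i * v a j ∂μ = 0) :
    ∫ a, u a ⬝ᵥ S.mulVec (v a) ∂μ = 0 := by
  simp only [pgDot_expand]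
  erw [integral_finset_sum _ fun i _ => integrable_finset_sum _ fun j _ =>
    (pgIntegrable_mul (hu i) (hv j)).const_mul _]
  refine Finset.sum_eq_zero fun i _ => ?_
  rw [integral_finset_sum _ fun j _ => (pgIntegrable_mul (hu i) (hv j)).const_mul _]
  refine Finset.sum_eq_zero fun j _ => ?_
  rw [integral_const_mul, hz i j, mul_zero]

lemma pgMeasurable_mulVec {α : Type*} [MeasurableSpace α] {n m : ℕ}
    (S : Matrix (Fin n) (Fin m) ℝ) {f : α → Fin m → ℝ} (hf : Measurable f) :
    Measurable (fun z => S.mulVec (f z)) := by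
  apply measurable_pi_lambda
  intro i
  simp only [Matrix.mulVec, dotProduct]
  exact Finset.measurable_sum _ fun j _ =>
    (measurable_const.mul ((measurable_pi_apply j).comp hf))

lemma pgMeasurable_traj {α : Type*} [MeasurableSpace α] {d p : ℕ}
    (A : Matrix (Fin d) (Fin d) ℝ) (B : Matrix (Fin d) (Fin p) ℝ)
    (K : ℕ → Matrix (Fin p) (Fin d) ℝ) {x0f : α → Fin d → ℝ} {ωf : ℕ → α → Fin d → ℝ}
    (hx : Measurable x0f) (hω : ∀ s, Measurable (ωf s)) (n : ℕ) :
    Measurable (fun z => traj A B K (x0f z) (fun s => ωf s z) n) := by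
  induction n with
  | zero => exact hx
  | succ n ih =>
    have h : (fun z => traj A B K (x0f z) (fun s => ωf s z) (n+1))
        = fun z => (A - B * K n).mulVec (traj A B K (x0f z) (fun s => ωf s z) n) + ωf n z :=
      rfl
    rw [h]
    exact (pgMeasurable_mulVec _ ih).add (hω n)

lemma pgIntegral_quad {n : ℕ} (S : Matrix (Fin n) (Fin n) ℝ) {f : Ω → Fin n → ℝ}
    (hf : ∀ i, MemLp (fun a => f a i) 2 μ) :
    ∫ a, f a ⬝ᵥ S.mulVec (f a) ∂μ = (S * secondMoment μ f).trace := by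
  simp only [pgDot_expand]
  erw [integral_finset_sum _ fun i _ => integrable_finset_sum _ fun j _ =>
    (pgIntegrable_mul (hf i) (hf j)).const_mul _]
  have h : ∀ i, ∫ a, ∑ j, S i j * (f a i * f a j) ∂μ
      = ∑ j, S i j * ∫ a, f a i * f a j ∂μ := by
    intro i
    rw [integral_finset_sum _ fun j _ => (pgIntegrable_mul (hf i) (hf j)).const_mul _]
    exact Finset.sum_congr rfl fun j _ => integral_const_mul _ _
  simp only [h]
  simp only [Matrix.trace, Matrix.diag, Matrix.mul_apply, secondMoment, Matrix.of_apply]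
  exact Finset.sum_congr rfl fun i _ => Finset.sum_congr rfl fun j _ =>
    congrArg _ (integral_congr_ae (Filter.Eventually.of_forall fun a => mul_comm _ _))

lemma pgSecondMoment_symm {n : ℕ} (f : Ω → Fin n → ℝ) :
    (secondMoment μ f)ᵀ = secondMoment μ f := by
  ext i j
  simp only [Matrix.transpose_apply, secondMoment, Matrix.of_apply]
  exact integral_congr_ae (Filter.Eventually.of_forall fun a => mul_comm _ _)

end PGProb

section PGCalc

variable {d p : ℕ}

lemma pgTraceFlip {a b : ℕ} (U V : Matrix (Fin a) (Fin b) ℝ) (C : Matrix (Fin a) (Fin a) ℝ)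
    (S : Matrix (Fin b) (Fin b) ℝ) :
    (Uᵀ * C * V * S).trace = (Vᵀ * Cᵀ * U * Sᵀ).trace := by
  rw [← Matrix.trace_transpose]
  simp only [Matrix.transpose_mul, Matrix.transpose_transpose]
  rw [show Sᵀ * (Vᵀ * (Cᵀ * U)) = Sᵀ * (Vᵀ * Cᵀ * U) from by rw [Matrix.mul_assoc],
    Matrix.trace_mul_comm]

lemma pgQuadBound {a b : ℕ} (C : Matrix (Fin a) (Fin a) ℝ) (S : Matrix (Fin b) (Fin b) ℝ) :
    ∃ c : ℝ, 0 ≤ c ∧ ∀ H : Matrix (Fin a) (Fin b) ℝ,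
      |(Hᵀ * C * H * S).trace| ≤ c * (‖H‖ * ‖H‖) := by
  refine ⟨∑ i : Fin b, ∑ j : Fin b, ∑ a2 : Fin a, ∑ a1 : Fin a, |C a1 a2| * |S j i|,
    Finset.sum_nonneg fun _ _ => Finset.sum_nonneg fun _ _ => Finset.sum_nonneg fun _ _ =>
      Finset.sum_nonneg fun _ _ => mul_nonneg (abs_nonneg _) (abs_nonneg _), fun H => ?_⟩
  have hH : ∀ (i : Fin a) (j : Fin b), |H i j| ≤ ‖H‖ := fun i j =>
    Matrix.norm_entry_le_entrywise_sup_norm H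
  have hexp : (Hᵀ * C * H * S).trace
      = ∑ i : Fin b, ∑ j : Fin b, ∑ a2 : Fin a, ∑ a1 : Fin a,
          H a1 i * C a1 a2 * H a2 j * S j i := by
    simp only [Matrix.trace, Matrix.diag, Matrix.mul_apply, Matrix.transpose_apply,
      Finset.sum_mul, Finset.mul_sum]
  rw [hexp, Finset.sum_mul]
  refine (Finset.abs_sum_le_sum_abs _ _).trans (Finset.sum_le_sum fun i _ => ?_)
  rw [Finset.sum_mul]
  refine (Finset.abs_sum_le_sum_abs _ _).trans (Finset.sum_le_sum fun j _ => ?_)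
  rw [Finset.sum_mul]
  refine (Finset.abs_sum_le_sum_abs _ _).trans (Finset.sum_le_sum fun a2 _ => ?_)
  rw [Finset.sum_mul]
  refine (Finset.abs_sum_le_sum_abs _ _).trans (Finset.sum_le_sum fun a1 _ => ?_)
  calc |H a1 i * C a1 a2 * H a2 j * S j i|
      = |H a1 i| * |C a1 a2| * |H a2 j| * |S j i| := by simp [abs_mul]
    _ ≤ ‖H‖ * |C a1 a2| * ‖H‖ * |S j i| := by
        gcongr
        · exact hH a1 i
        · exact hH a2 j
    _ = |C a1 a2| * |S j i| * (‖H‖ * ‖H‖) := by ring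

lemma pgExpand {d p : ℕ} (Qt : Matrix (Fin d) (Fin d) ℝ) (Rt : Matrix (Fin p) (Fin p) ℝ)
    (A : Matrix (Fin d) (Fin d) ℝ) (B : Matrix (Fin d) (Fin p) ℝ)
    (P S : Matrix (Fin d) (Fin d) ℝ) (hP : Pᵀ = P) (hR : Rtᵀ = Rt) (hS : Sᵀ = S)
    (Kt H : Matrix (Fin p) (Fin d) ℝ) :
    ((Qt + (Kt + H)ᵀ * Rt * (Kt + H) + (A - B * (Kt + H))ᵀ * P * (A - B * (Kt + H))) * S).trace
      - ((Qt + Ktᵀ * Rt * Kt + (A - B * Kt)ᵀ * P * (A - B * Kt)) * S).trace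
      - 2 * ((Hᵀ * (((Rt + Bᵀ * P * B) * Kt - Bᵀ * P * A) * S)).trace)
      = (Hᵀ * (Rt + Bᵀ * P * B) * H * S).trace := by
  simp only [Matrix.mul_add, Matrix.add_mul, Matrix.mul_sub, Matrix.sub_mul,
    Matrix.transpose_add, Matrix.transpose_sub, Matrix.transpose_mul,
    Matrix.trace_add, Matrix.trace_sub, Matrix.mul_assoc]
  have h1 := pgTraceFlip Kt H Rt S
  have h2 := pgTraceFlip A (B * H) P S
  have h3 := pgTraceFlip (B * Kt) (B * H) P S
  simp only [Matrix.transpose_mul, Matrix.mul_assoc, hP, hR, hS] at h1 h2 h3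
  rw [h1, h2, h3]
  ring

lemma pgHasFDeriv (Qt : Matrix (Fin d) (Fin d) ℝ) (Rt : Matrix (Fin p) (Fin p) ℝ)
    (A : Matrix (Fin d) (Fin d) ℝ) (B : Matrix (Fin d) (Fin p) ℝ)
    (P S : Matrix (Fin d) (Fin d) ℝ) (hP : Pᵀ = P) (hR : Rtᵀ = Rt) (hS : Sᵀ = S)
    (Kt : Matrix (Fin p) (Fin d) ℝ) (c0 : ℝ) :
    ∃ L : Matrix (Fin p) (Fin d) ℝ →L[ℝ] ℝ,
      HasFDerivAt
        (fun M => c0 + ((Qt + Mᵀ * Rt * M + (A - B * M)ᵀ * P * (A - B * M)) * S).trace) L Kt ∧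
      ∀ H, L H = 2 * ((Hᵀ * (((Rt + Bᵀ * P * B) * Kt - Bᵀ * P * A) * S)).trace) := by
  set E : Matrix (Fin p) (Fin d) ℝ := (Rt + Bᵀ * P * B) * Kt - Bᵀ * P * A with hE
  set Llin : Matrix (Fin p) (Fin d) ℝ →ₗ[ℝ] ℝ :=
    { toFun := fun H => 2 * ((Hᵀ * (E * S)).trace)
      map_add' := by
        intro x y
        simp only [Matrix.transpose_add, Matrix.add_mul, Matrix.trace_add]
        ring
      map_smul' := by
        intro c x
        simp only [Matrix.transpose_smul, Matrix.smul_mul, Matrix.trace_smul, smul_eq_mul,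
          RingHom.id_apply]
        ring } with hLlin
  refine ⟨LinearMap.toContinuousLinearMap Llin, ?_, fun H => rfl⟩
  set f : Matrix (Fin p) (Fin d) ℝ → ℝ :=
    fun M => c0 + ((Qt + Mᵀ * Rt * M + (A - B * M)ᵀ * P * (A - B * M)) * S).trace with hf
  have key : ∀ H, f (Kt + H) - f Kt - LinearMap.toContinuousLinearMap Llin H
      = (Hᵀ * (Rt + Bᵀ * P * B) * H * S).trace := by
    intro H
    have hexp := pgExpand Qt Rt A B P S hP hR hS Kt H
    have hL : LinearMap.toContinuousLinearMap Llin H = 2 * ((Hᵀ * (E * S)).trace) := rfl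
    rw [hL, hf, hE]
    simp only []
    linarith [hexp]
  refine hasFDerivAt_iff_isLittleO_nhds_zero.2 ?_
  obtain ⟨c, hc0, hc⟩ := pgQuadBound (Rt + Bᵀ * P * B) S
  rw [Asymptotics.isLittleO_iff]
  intro ε hε
  have hpos : 0 < ε / (c + 1) := div_pos hε (by linarith)
  filter_upwards [Metric.ball_mem_nhds (0 : Matrix (Fin p) (Fin d) ℝ) hpos] with H hH
  rw [mem_ball_zero_iff] at hH
  have h5 : ‖H‖ * (c + 1) < ε := (lt_div_iff₀ (by linarith)).1 hH
  erw [key H, Real.norm_eq_abs]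
  have h6 := hc H
  have h7 : ‖H‖ ≥ 0 := norm_nonneg H
  nlinarith [h6, h7, h5, hc0]

end PGCalc

/-- Exact policy gradient. The Fréchet derivative of the cost `C(K)`
with respect to the stage-`t` block `K_t` (other blocks held fixed) is the linear map
`H ↦ 2 trace(Hᵀ E_t(K_t) Σ_t)`, where `E_t(K_t) = (R_t + Bᵀ P^K_{t+1} B) K_t - Bᵀ P^K_{t+1} A`
and `Σ_t = E[x_t x_tᵀ]` is the state second-moment matrix under policy `K`; that is,
`∇_{K_t} C(K) = 2 E_t(K_t) Σ_t`. -/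

theorem exact_policy_gradient
    {Ω : Type*} [MeasurableSpace Ω] (μ : Measure Ω) [IsProbabilityMeasure μ]
    {d p T : ℕ} (hT : 1 ≤ T)
    (A : Matrix (Fin d) (Fin d) ℝ) (B : Matrix (Fin d) (Fin p) ℝ)
    (Q : ℕ → Matrix (Fin d) (Fin d) ℝ) (R : ℕ → Matrix (Fin p) (Fin p) ℝ)
    (hQ : ∀ t ≤ T, (Q t).PosDef) (hR : ∀ t < T, (R t).PosDef)
    (x0 : Ω → Fin d → ℝ) (ω : ℕ → Ω → Fin d → ℝ)
    (hnoise : IIDZeroMeanNoise μ x0 ω)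
    (K : ℕ → Matrix (Fin p) (Fin d) ℝ)
    (t : ℕ) (ht : t < T) :
    ∃ L : Matrix (Fin p) (Fin d) ℝ →L[ℝ] ℝ,
      HasFDerivAt (fun M => expCost μ T A B Q R x0 ω (Function.update K t M)) L (K t) ∧
      ∀ H : Matrix (Fin p) (Fin d) ℝ,
        L H = 2 * (Hᵀ *
          (((R t + Bᵀ * policyP A B Q R K T (t + 1) * B) * K t -
              Bᵀ * policyP A B Q R K T (t + 1) * A) *
            secondMoment μ (fun a => traj A B K (x0 a) (fun s => ω s a) t))).trace := by
  obtain ⟨hx0m, hωm, hind, hid, hω2, hωmean, hx02⟩ := hnoise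
  have hω2' : ∀ s i, MemLp (fun a => ω s a i) 2 μ := fun s i => pgMemLp_apply (hω2 s) i
  have hx0' : ∀ i, MemLp (fun a => x0 a i) 2 μ := fun i => pgMemLp_apply hx02 i
  have hX2 : ∀ n i, MemLp (fun a => traj A B K (x0 a) (fun s => ω s a) n i) 2 μ := by
    intro n
    induction n with
    | zero => exact hx0'
    | succ n ih =>
      intro i
      have h : (fun a => traj A B K (x0 a) (fun s => ω s a) (n+1) i)
          = fun a => (A - B * K n).mulVec (traj A B K (x0 a) (fun s => ω s a) n) i
              + ω n a i := rfl
      rw [h]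
      exact (pgMemLp_mulVec _ ih i).add (hω2' n i)
  have hQsym : ∀ s ≤ T, (Q s)ᵀ = Q s := fun s hs => by
    rw [← Matrix.conjTranspose_eq_transpose_of_trivial]
    exact (hQ s hs).1.eq
  have hRsym : ∀ s < T, (R s)ᵀ = R s := fun s hs => by
    rw [← Matrix.conjTranspose_eq_transpose_of_trivial]
    exact (hR s hs).1.eq
  set Xf : Ω → Fin d → ℝ := fun a => traj A B K (x0 a) (fun s => ω s a) t with hXfdef
  set k0 : ℕ := T - (t+1) with hk0
  set P : Matrix (Fin d) (Fin d) ℝ := policyPAux A B Q R K T k0 with hPdef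
  have hPsym : Pᵀ = P := pgP_symm A B Q R T K hT hQsym hRsym k0
  have hq2 : ∀ k i, MemLp (fun a => pgQvec A B Q R T K (fun s => ω s a) k i) 2 μ := by
    intro k
    induction k with
    | zero =>
      intro i
      have h : (fun a => pgQvec A B Q R T K (fun s => ω s a) 0 i) = fun _ => (0:ℝ) := rfl
      rw [h]
      exact memLp_const 0
    | succ k ih =>
      intro i
      have h : (fun a => pgQvec A B Q R T K (fun s => ω s a) (k+1) i)
          = fun a => (A - B * K (T - (k+1)))ᵀ.mulVec
              ((policyPAux A B Q R K T k + (policyPAux A B Q R K T k)ᵀ).mulVec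
                  (ω (T - (k+1)) a) + pgQvec A B Q R T K (fun s => ω s a) k) i := rfl
      rw [h]
      exact pgMemLp_mulVec _ (fun j => (pgMemLp_mulVec _ (hω2' _) j).add (ih j)) i
  have hωmean' : ∀ s i, ∫ a, ω s a i ∂μ = 0 := by
    intro s i
    have hInt : Integrable (ω s) μ := (hω2 s).integrable one_le_two
    have h := (ContinuousLinearMap.proj (R := ℝ) (φ := fun _ : Fin d => ℝ) i).integral_comp_comm
      hInt
    rw [hωmean s] at h
    simpa using h
  -- key zero-correlation lemma
  have hkey : ∀ s, t ≤ s → ∀ i j, ∫ a, ω s a i * Xf a j ∂μ = 0 := by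
    intro s hs i j
    have hfm : ∀ o : Option ℕ, Measurable ((fun o : Option ℕ => o.elim x0 ω) o) := by
      rintro (_ | u)
      exacts [hx0m, hωm u]
    set S1 : Finset (Option ℕ) := insert none ((Finset.range t).image some) with hS1
    have hdisj : Disjoint S1 ({some s} : Finset (Option ℕ)) := by
      rw [Finset.disjoint_right]
      intro x hx hx1
      rw [Finset.mem_singleton] at hx
      subst hx
      rcases Finset.mem_insert.1 hx1 with h | h
      · exact (Option.some_ne_none s h).elim
      · obtain ⟨u, hu, hv⟩ := Finset.mem_image.1 h
        rw [Finset.mem_range] at hu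
        have : u = s := by injection hv
        omega
    have hIF := hind.indepFun_finset S1 {some s} hdisj hfm
    have hnone : (none : Option ℕ) ∈ S1 := Finset.mem_insert_self _ _
    have hsome : ∀ u, u < t → some u ∈ S1 := fun u hu =>
      Finset.mem_insert_of_mem (Finset.mem_image_of_mem _ (Finset.mem_range.2 hu))
    set φ : (S1 → (Fin d → ℝ)) → ℝ := fun g =>
      traj A B K (g ⟨none, hnone⟩)
        (fun u => if h : u < t then g ⟨some u, hsome u h⟩ else 0) t j with hφ
    have hφm : Measurable φ := by
      apply (measurable_pi_apply j).comp
      apply pgMeasurable_traj A B K (measurable_pi_apply _)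
      intro u
      by_cases h : u < t
      · simp only [dif_pos h]
        exact measurable_pi_apply _
      · simp only [dif_neg h]
        exact measurable_const
    set ψ : (({some s} : Finset (Option ℕ)) → (Fin d → ℝ)) → ℝ := fun g =>
      g ⟨some s, Finset.mem_singleton_self _⟩ i with hψ
    have hψm : Measurable ψ := (measurable_pi_apply i).comp (measurable_pi_apply _)
    have hcomp := hIF.comp hφm hψm
    have e1 : (φ ∘ fun a (o : S1) => (o : Option ℕ).elim x0 ω a) = fun a => Xf a j := by
      funext a
      exact congrFun (traj_congr_noise A B K _ (x0 a) _ (fun u => ω u a) rfl t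
        (fun u hu => by rw [dif_pos hu]; rfl)) j
    have e2 : (ψ ∘ fun a (o : ({some s} : Finset (Option ℕ))) => (o : Option ℕ).elim x0 ω a)
        = fun a => ω s a i := rfl
    rw [e1, e2] at hcomp
    have hInt1 : Integrable (fun a => ω s a i) μ := (hω2' s i).integrable one_le_two
    have hInt2 : Integrable (fun a => Xf a j) μ := (hX2 t j).integrable one_le_two
    have hmul : ∫ a, ω s a i * Xf a j ∂μ
        = (∫ a, ω s a i ∂μ) * ∫ a, Xf a j ∂μ :=
      IndepFun.integral_mul_eq_mul_integral (X := fun a => ω s a i) (Y := fun a => Xf a j)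
        hcomp.symm hInt1.1 hInt2.1
    rw [hmul, hωmean' s i, zero_mul]
  -- qvec cross terms vanish
  have hqzero : ∀ k, k ≤ k0 → ∀ N : Matrix (Fin d) (Fin d) ℝ,
      ∫ a, pgQvec A B Q R T K (fun u => ω u a) k ⬝ᵥ N.mulVec (Xf a) ∂μ = 0 := by
    intro k
    induction k with
    | zero =>
      intro _ N
      simp [pgQvec]
    | succ k ih =>
      intro hk N
      have hn : t ≤ T - (k+1) := by omega
      have hpt : ∀ a, pgQvec A B Q R T K (fun u => ω u a) (k+1) ⬝ᵥ N.mulVec (Xf a)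
          = ω (T - (k+1)) a ⬝ᵥ
              ((policyPAux A B Q R K T k + (policyPAux A B Q R K T k)ᵀ)ᵀ
                * ((A - B * K (T - (k+1))) * N)).mulVec (Xf a)
            + pgQvec A B Q R T K (fun u => ω u a) k ⬝ᵥ
                ((A - B * K (T - (k+1))) * N).mulVec (Xf a) := by
        intro a
        show ((A - B * K (T - (k+1)))ᵀ.mulVec _) ⬝ᵥ N.mulVec (Xf a) = _
        rw [pgDot2, Matrix.transpose_transpose, Matrix.mulVec_mulVec, add_dotProduct,
          pgDot2, Matrix.mulVec_mulVec]
      simp only [hpt]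
      rw [integral_add (pgIntegrable_dot _ (hω2' _) (hX2 t))
        (pgIntegrable_dot _ (hq2 k) (hX2 t)),
        pgCrossZero _ (hω2' _) (hX2 t) (hkey _ hn), ih (by omega) _, add_zero]
  -- the expected-cost formula
  set C0fun : Ω → ℝ := fun a =>
    (∑ s ∈ Finset.range t,
        (traj A B K (x0 a) (fun u => ω u a) s ⬝ᵥ
            (Q s).mulVec (traj A B K (x0 a) (fun u => ω u a) s)
          + (K s).mulVec (traj A B K (x0 a) (fun u => ω u a) s) ⬝ᵥ
              (R s).mulVec ((K s).mulVec (traj A B K (x0 a) (fun u => ω u a) s))))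
      + ω t a ⬝ᵥ P.mulVec (ω t a)
      + pgQvec A B Q R T K (fun u => ω u a) k0 ⬝ᵥ ω t a
      + pgRsc A B Q R T K (fun u => ω u a) k0 with hC0fun
  have hrint : ∀ k, Integrable (fun a => pgRsc A B Q R T K (fun u => ω u a) k) μ := by
    intro k
    induction k with
    | zero =>
      have h : (fun a => pgRsc A B Q R T K (fun u => ω u a) 0) = fun _ => (0:ℝ) := rfl
      rw [h]
      exact integrable_const 0
    | succ k ih =>
      have h : (fun a => pgRsc A B Q R T K (fun u => ω u a) (k+1))
          = fun a => (ω (T - (k+1)) a ⬝ᵥ (policyPAux A B Q R K T k).mulVec (ω (T - (k+1)) a)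
              + pgQvec A B Q R T K (fun u => ω u a) k ⬝ᵥ ω (T - (k+1)) a)
              + pgRsc A B Q R T K (fun u => ω u a) k := by
        funext a
        show _ + _ + _ = _
        ring
      rw [h]
      exact ((pgIntegrable_dot _ (hω2' _) (hω2' _)).add
        (pgIntegrable_dotPlain (hq2 k) (hω2' _))).add ih
  have hC0int : Integrable C0fun μ := by
    refine (((integrable_finset_sum _ fun s _ => ?_).add
      (pgIntegrable_dot P (hω2' t) (hω2' t))).add
      (pgIntegrable_dotPlain (hq2 k0) (hω2' t))).add (hrint k0)
    exact (pgIntegrable_dot (Q s) (hX2 s) (hX2 s)).add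
      (pgIntegrable_dot (R s) (fun j => pgMemLp_mulVec (K s) (hX2 s) j)
        (fun j => pgMemLp_mulVec (K s) (hX2 s) j))
  have hdecomp : ∀ M, expCost μ T A B Q R x0 ω (Function.update K t M)
      = (∫ a, C0fun a ∂μ)
        + ((Q t + Mᵀ * R t * M + (A - B * M)ᵀ * P * (A - B * M)) * secondMoment μ Xf).trace := by
    intro M
    rw [expCost]
    have hpw : ∀ a, trajCost T A B Q R (Function.update K t M) (x0 a) (fun u => ω u a)
        = C0fun a
          + Xf a ⬝ᵥ (Q t + Mᵀ * R t * M + (A - B * M)ᵀ * P * (A - B * M)).mulVec (Xf a)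
          + (((P + Pᵀ).mulVec (ω t a) + pgQvec A B Q R T K (fun u => ω u a) k0) ⬝ᵥ
              ((A - B * M).mulVec (Xf a))) := fun a =>
      pgPointwise A B Q R T K M t ht (x0 a) (fun u => ω u a)
    simp only [hpw]
    have hintquad : Integrable (fun a => Xf a ⬝ᵥ
        (Q t + Mᵀ * R t * M + (A - B * M)ᵀ * P * (A - B * M)).mulVec (Xf a)) μ :=
      pgIntegrable_dot _ (hX2 t) (hX2 t)
    have hintcross : Integrable (fun a =>
        ((P + Pᵀ).mulVec (ω t a) + pgQvec A B Q R T K (fun u => ω u a) k0) ⬝ᵥ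
          ((A - B * M).mulVec (Xf a))) μ :=
      pgIntegrable_dot _ (fun j => (pgMemLp_mulVec (P + Pᵀ) (hω2' t) j).add (hq2 k0 j))
        (hX2 t)
    have hadd1 : Integrable (fun a => C0fun a
        + Xf a ⬝ᵥ (Q t + Mᵀ * R t * M + (A - B * M)ᵀ * P * (A - B * M)).mulVec (Xf a)) μ :=
      hC0int.add hintquad
    rw [integral_add hadd1 hintcross, integral_add hC0int hintquad,
      pgIntegral_quad _ (hX2 t)]
    have hcross : ∫ a, ((P + Pᵀ).mulVec (ω t a)
        + pgQvec A B Q R T K (fun u => ω u a) k0) ⬝ᵥ ((A - B * M).mulVec (Xf a)) ∂μ = 0 := by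
      have hsplit : ∀ a, ((P + Pᵀ).mulVec (ω t a)
          + pgQvec A B Q R T K (fun u => ω u a) k0) ⬝ᵥ ((A - B * M).mulVec (Xf a))
          = ω t a ⬝ᵥ ((P + Pᵀ)ᵀ * (A - B * M)).mulVec (Xf a)
            + pgQvec A B Q R T K (fun u => ω u a) k0 ⬝ᵥ (A - B * M).mulVec (Xf a) := by
        intro a
        rw [add_dotProduct, pgDot2, Matrix.mulVec_mulVec]
      simp only [hsplit]
      rw [integral_add (pgIntegrable_dot _ (hω2' t) (hX2 t))
        (pgIntegrable_dot _ (hq2 k0) (hX2 t)),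
        pgCrossZero _ (hω2' t) (hX2 t) (hkey t le_rfl), hqzero k0 le_rfl _, add_zero]
    rw [hcross, add_zero]
  obtain ⟨L, hL, hLspec⟩ := pgHasFDeriv (Q t) (R t) A B P (secondMoment μ Xf) hPsym
    (hRsym t ht) (pgSecondMoment_symm Xf) (K t) (∫ a, C0fun a ∂μ)
  refine ⟨L, ?_, ?_⟩
  · have hfun : (fun M => expCost μ T A B Q R x0 ω (Function.update K t M))
        = fun M => (∫ a, C0fun a ∂μ)
          + ((Q t + Mᵀ * R t * M + (A - B * M)ᵀ * P * (A - B * M))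
              * secondMoment μ Xf).trace := funext hdecomp
    rw [hfun]
    exact hL
  · intro H
    rw [hLspec H]
    rfl


end
end
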